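/- Let κ ∈ (0,8) and suppose the SLE_κ trace γ satisfies the moment bound E[|γ(t) − γ(s)|^q] ≤ C s^{−ζ/2}(t−s)^{(q+ζ)/2} for 0 < s < t < T, where q = q(r) = (1+κ/4)r − κr²/8 and ζ = ζ(r) = r − κr²/8 for some r with q(r) > 1 and ζ(r)+q(r) > 2. Then for any δ ∈ (1/q, (ζ+q)/(2q)) and any η > 0 with η < δ − ζ/(2q) and η ≤ δ − 1/q, the expectation E‖γ‖^q_{δ,q,η} of the singular Besov norm is finite. -/

import Mathlib

open Set MeasureTheory ENNReal

lemma lemB {c T : ℝ} (hc : -1 < c) (hT : 0 < T) :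
    ∫⁻ u in Ioo (0:ℝ) T, ENNReal.ofReal (u ^ c) < ⊤ := by
  have h1 : IntervalIntegrable (fun x : ℝ => x ^ c) volume 0 T := intervalIntegral.intervalIntegrable_rpow' hc
  have h2 : IntegrableOn (fun x : ℝ => x ^ c) (Ioo 0 T) volume := by
    have := (intervalIntegrable_iff_integrableOn_Ioc_of_le hT.le).mp h1
    exact this.mono_set Ioo_subset_Ioc_self
  exact h2.lintegral_lt_top

lemma translate_Ioo (s T b : ℝ) :
    ∫⁻ t in Ioo s T, ENNReal.ofReal ((t - s) ^ b)
      = ∫⁻ u in Ioo (0:ℝ) (T - s), ENNReal.ofReal (u ^ b) := by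
  rw [← lintegral_indicator measurableSet_Ioo _, ← lintegral_indicator measurableSet_Ioo _]
  rw [← lintegral_add_right_eq_self
    (fun t => (Ioo s T).indicator (fun t => ENNReal.ofReal ((t - s) ^ b)) t) s]
  congr 1
  ext u
  simp only [Set.indicator_apply, mem_Ioo, add_sub_cancel_right]
  congr 1
  simp only [eq_iff_iff]
  constructor
  · rintro ⟨h1, h2⟩; exact ⟨by linarith, by linarith⟩
  · rintro ⟨h1, h2⟩; exact ⟨by linarith, by linarith⟩

lemma lemA {T a b : ℝ} (hT : 0 < T) (ha : -1 < a) (hb : -1 < b) :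
    ∫⁻ p : ℝ × ℝ in {p : ℝ × ℝ | 0 < p.1 ∧ p.1 < p.2 ∧ p.2 < T},
      ENNReal.ofReal (p.1 ^ a * (p.2 - p.1) ^ b) < ⊤ := by
  have hKlt : (∫⁻ u in Ioo (0:ℝ) T, ENNReal.ofReal (u ^ b)) < ⊤ := lemB hb hT
  set K := ∫⁻ u in Ioo (0:ℝ) T, ENNReal.ofReal (u ^ b) with hK
  have hS : MeasurableSet {p : ℝ × ℝ | 0 < p.1 ∧ p.1 < p.2 ∧ p.2 < T} :=
    (measurableSet_lt measurable_const measurable_fst).inter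
      ((measurableSet_lt measurable_fst measurable_snd).inter
        (measurableSet_lt measurable_snd measurable_const))
  have hfm : Measurable fun p : ℝ × ℝ => ENNReal.ofReal (p.1 ^ a * (p.2 - p.1) ^ b) :=
    ((measurable_fst.pow_const a).mul
      ((measurable_snd.sub measurable_fst).pow_const b)).ennreal_ofReal
  rw [← lintegral_indicator hS _, Measure.volume_eq_prod,
    lintegral_prod _ (hfm.indicator hS).aemeasurable]
  have key : ∀ s : ℝ,
      (∫⁻ t, ({p : ℝ × ℝ | 0 < p.1 ∧ p.1 < p.2 ∧ p.2 < T}.indicator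
        (fun p => ENNReal.ofReal (p.1 ^ a * (p.2 - p.1) ^ b)) (s, t)))
      ≤ (Ioo (0:ℝ) T).indicator (fun s => ENNReal.ofReal (s ^ a) * K) s := by
    intro s
    by_cases hs : s ∈ Ioo (0:ℝ) T
    · have hptw : ∀ t, ({p : ℝ × ℝ | 0 < p.1 ∧ p.1 < p.2 ∧ p.2 < T}.indicator
          (fun p => ENNReal.ofReal (p.1 ^ a * (p.2 - p.1) ^ b)) (s, t))
          ≤ ENNReal.ofReal (s ^ a) *
            (Ioo s T).indicator (fun t => ENNReal.ofReal ((t - s) ^ b)) t := by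
        intro t
        by_cases ht : (s, t) ∈ {p : ℝ × ℝ | 0 < p.1 ∧ p.1 < p.2 ∧ p.2 < T}
        · have h1 : 0 < s := ht.1
          have h2 := ht.2.1
          have h3 := ht.2.2
          rw [Set.indicator_of_mem ht, Set.indicator_of_mem (show t ∈ Ioo s T from ⟨h2, h3⟩)]
          rw [← ENNReal.ofReal_mul (Real.rpow_nonneg h1.le a)]
        · rw [Set.indicator_of_notMem ht]; exact zero_le
      calc (∫⁻ t, ({p : ℝ × ℝ | 0 < p.1 ∧ p.1 < p.2 ∧ p.2 < T}.indicator
            (fun p => ENNReal.ofReal (p.1 ^ a * (p.2 - p.1) ^ b)) (s, t)))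
          ≤ ∫⁻ t, ENNReal.ofReal (s ^ a) *
              (Ioo s T).indicator (fun t => ENNReal.ofReal ((t - s) ^ b)) t :=
            lintegral_mono hptw
        _ = ENNReal.ofReal (s ^ a) * ∫⁻ t in Ioo s T, ENNReal.ofReal ((t - s) ^ b) := by
            rw [lintegral_const_mul' _ _ ENNReal.ofReal_ne_top,
              lintegral_indicator measurableSet_Ioo _]
        _ = ENNReal.ofReal (s ^ a) * ∫⁻ u in Ioo (0:ℝ) (T - s), ENNReal.ofReal (u ^ b) := by
            rw [translate_Ioo]
        _ ≤ ENNReal.ofReal (s ^ a) * K := by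
            refine mul_le_mul_right (lintegral_mono_set ?_) _
            exact Ioo_subset_Ioo le_rfl (by linarith [hs.1])
        _ = (Ioo (0:ℝ) T).indicator (fun s => ENNReal.ofReal (s ^ a) * K) s := by
            rw [Set.indicator_of_mem hs]
    · have hz : ∀ t, ({p : ℝ × ℝ | 0 < p.1 ∧ p.1 < p.2 ∧ p.2 < T}.indicator
          (fun p => ENNReal.ofReal (p.1 ^ a * (p.2 - p.1) ^ b)) (s, t)) = 0 := by
        intro t
        apply Set.indicator_of_notMem
        simp only [mem_Ioo, not_and_or, not_lt] at hs
        rintro ⟨h1, h2, h3⟩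
        rcases hs with h | h
        · linarith
        · linarith
      simp only [hz, lintegral_zero]
      exact zero_le
  calc (∫⁻ s, ∫⁻ t, ({p : ℝ × ℝ | 0 < p.1 ∧ p.1 < p.2 ∧ p.2 < T}.indicator
        (fun p => ENNReal.ofReal (p.1 ^ a * (p.2 - p.1) ^ b)) (s, t)))
      ≤ ∫⁻ s, (Ioo (0:ℝ) T).indicator (fun s => ENNReal.ofReal (s ^ a) * K) s :=
        lintegral_mono key
    _ = ∫⁻ s in Ioo (0:ℝ) T, ENNReal.ofReal (s ^ a) * K := by
        rw [lintegral_indicator measurableSet_Ioo _]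
    _ = (∫⁻ s in Ioo (0:ℝ) T, ENNReal.ofReal (s ^ a)) * K :=
        lintegral_mul_const' _ _ hKlt.ne
    _ < ⊤ := ENNReal.mul_lt_top (lemB ha hT) hKlt

/-- Finiteness of the expected singular Besov norm of the SLE trace, given
the moment bound `E[|γ_t − γ_s|^q] ≤ C s^{−ζ/2}(t−s)^{(q+ζ)/2}`. -/
theorem sle_singular_besov_moment
    {Ω : Type*} [MeasurableSpace Ω] (μ : Measure Ω) [IsProbabilityMeasure μ]
    (κ T C r q ζ δ η α : ℝ)
    (hκ : κ ∈ Ioo (0:ℝ) 8) (hT : 0 < T) (hC : 0 ≤ C)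
    (hqdef : q = (1 + κ / 4) * r - κ * r ^ 2 / 8)
    (hζdef : ζ = r - κ * r ^ 2 / 8)
    (hq1 : 1 < q) (hζq : 2 < ζ + q)
    (hαdef : α = δ - 1 / q)
    (hδ : δ ∈ Ioo (1 / q) ((ζ + q) / (2 * q)))
    (hη0 : 0 < η) (hη1 : η < δ - ζ / (2 * q)) (hη2 : η ≤ δ - 1 / q)
    (γ : Ω → ℝ → ℂ)
    (hmeas : Measurable fun p : Ω × ℝ × ℝ => γ p.1 p.2.2 - γ p.1 p.2.1)
    (hmom : ∀ s t : ℝ, 0 < s → s < t → t < T →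
      (∫⁻ ω, ENNReal.ofReal (‖γ ω t - γ ω s‖ ^ q) ∂μ) ≤
        ENNReal.ofReal (C * s ^ (-ζ / 2) * (t - s) ^ ((q + ζ) / 2))) :
    (∫⁻ ω, (∫⁻ p in {p : ℝ × ℝ | 0 < p.1 ∧ p.1 < p.2 ∧ p.2 < T},
        ENNReal.ofReal (‖γ ω p.2 - γ ω p.1‖ ^ q /
          (p.1 ^ (q * (η - α)) * (p.2 - p.1) ^ (1 + δ * q)))) ∂μ) < ⊤ := by
  have hq0 : (0:ℝ) < q := by linarith
  have hS : MeasurableSet {p : ℝ × ℝ | 0 < p.1 ∧ p.1 < p.2 ∧ p.2 < T} :=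
    (measurableSet_lt measurable_const measurable_fst).inter
      ((measurableSet_lt measurable_fst measurable_snd).inter
        (measurableSet_lt measurable_snd measurable_const))
  set a' : ℝ := -ζ / 2 - q * (η - α) with ha'def
  set b' : ℝ := (q + ζ) / 2 - (1 + δ * q) with hb'def
  have ha' : -1 < a' := by
    have h1 : q * (ζ / (2 * q)) = ζ / 2 := by field_simp
    have h2 : q * (1 / q) = 1 := by field_simp
    have h3 := mul_lt_mul_of_pos_left hη1 hq0
    rw [mul_sub, h1] at h3
    rw [ha'def, hαdef]
    nlinarith [h2]
  have hb' : -1 < b' := by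
    have h1 : q * ((ζ + q) / (2 * q)) = (ζ + q) / 2 := by field_simp
    have h3 := mul_lt_mul_of_pos_left hδ.2 hq0
    rw [h1] at h3
    rw [hb'def]; nlinarith
  -- measurability of the integrand on the product space
  have hFmeas : Measurable fun z : Ω × ℝ × ℝ =>
      ENNReal.ofReal (‖γ z.1 z.2.2 - γ z.1 z.2.1‖ ^ q /
        (z.2.1 ^ (q * (η - α)) * (z.2.2 - z.2.1) ^ (1 + δ * q))) := by
    apply Measurable.ennreal_ofReal
    exact (hmeas.norm.pow_const q).div
      ((measurable_snd.fst.pow_const _).mul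
        ((measurable_snd.snd.sub measurable_snd.fst).pow_const _))
  rw [lintegral_lintegral_swap hFmeas.aemeasurable]
  have key : ∀ p ∈ {p : ℝ × ℝ | 0 < p.1 ∧ p.1 < p.2 ∧ p.2 < T},
      (∫⁻ ω, ENNReal.ofReal (‖γ ω p.2 - γ ω p.1‖ ^ q /
          (p.1 ^ (q * (η - α)) * (p.2 - p.1) ^ (1 + δ * q))) ∂μ)
      ≤ ENNReal.ofReal C * ENNReal.ofReal (p.1 ^ a' * (p.2 - p.1) ^ b') := by
    rintro ⟨s, t⟩ ⟨h1, h2, h3⟩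
    have hs : (0:ℝ) < s := h1
    have hts : (0:ℝ) < t - s := by linarith
    have hD : 0 < s ^ (q * (η - α)) * (t - s) ^ (1 + δ * q) :=
      mul_pos (Real.rpow_pos_of_pos hs _) (Real.rpow_pos_of_pos hts _)
    have hDne : ENNReal.ofReal (s ^ (q * (η - α)) * (t - s) ^ (1 + δ * q)) ≠ 0 :=
      (ENNReal.ofReal_pos.mpr hD).ne'
    calc (∫⁻ ω, ENNReal.ofReal (‖γ ω t - γ ω s‖ ^ q /
            (s ^ (q * (η - α)) * (t - s) ^ (1 + δ * q))) ∂μ)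
        = ∫⁻ ω, ENNReal.ofReal (‖γ ω t - γ ω s‖ ^ q) *
            (ENNReal.ofReal (s ^ (q * (η - α)) * (t - s) ^ (1 + δ * q)))⁻¹ ∂μ := by
          simp_rw [ENNReal.ofReal_div_of_pos hD, div_eq_mul_inv]
      _ = (∫⁻ ω, ENNReal.ofReal (‖γ ω t - γ ω s‖ ^ q) ∂μ) *
            (ENNReal.ofReal (s ^ (q * (η - α)) * (t - s) ^ (1 + δ * q)))⁻¹ :=
          lintegral_mul_const' _ _ (by simp [ENNReal.inv_ne_top, hDne])
      _ ≤ ENNReal.ofReal (C * s ^ (-ζ / 2) * (t - s) ^ ((q + ζ) / 2)) *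
            (ENNReal.ofReal (s ^ (q * (η - α)) * (t - s) ^ (1 + δ * q)))⁻¹ :=
          mul_le_mul_left (hmom s t hs h2 h3) _
      _ = ENNReal.ofReal C * ENNReal.ofReal (s ^ a' * (t - s) ^ b') := by
          rw [← div_eq_mul_inv, ← ENNReal.ofReal_div_of_pos hD, ← ENNReal.ofReal_mul hC]
          congr 1
          rw [ha'def, hb'def, Real.rpow_sub hs, Real.rpow_sub hts]
          field_simp
  calc (∫⁻ p in {p : ℝ × ℝ | 0 < p.1 ∧ p.1 < p.2 ∧ p.2 < T},
        (∫⁻ ω, ENNReal.ofReal (‖γ ω p.2 - γ ω p.1‖ ^ q /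
          (p.1 ^ (q * (η - α)) * (p.2 - p.1) ^ (1 + δ * q))) ∂μ))
      ≤ ∫⁻ p in {p : ℝ × ℝ | 0 < p.1 ∧ p.1 < p.2 ∧ p.2 < T},
          ENNReal.ofReal C * ENNReal.ofReal (p.1 ^ a' * (p.2 - p.1) ^ b') :=
        setLIntegral_mono (by
          exact measurable_const.mul
            (((measurable_fst.pow_const a').mul
              ((measurable_snd.sub measurable_fst).pow_const b')).ennreal_ofReal)) key
    _ = ENNReal.ofReal C * ∫⁻ p in {p : ℝ × ℝ | 0 < p.1 ∧ p.1 < p.2 ∧ p.2 < T},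
          ENNReal.ofReal (p.1 ^ a' * (p.2 - p.1) ^ b') :=
        lintegral_const_mul' _ _ ENNReal.ofReal_ne_top
    _ < ⊤ := ENNReal.mul_lt_top ENNReal.ofReal_lt_top (lemA hT ha' hb')
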